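/- For all integers n ≥ 2, the identity ∑_{i=1}^{n-1} C(n,i) · |(1/2)_i| · |(1/2)_{n-i}| = 2 · |(1/2)_n| holds, where (q)_k denotes the falling factorial q(q-1)···(q-k+1) with (q)_0 = 1. -/

import Mathlib

/-- The absolute value of the falling factorial `(1/2)_n = (1/2)(1/2-1)⋯(1/2-n+1)`. -/
noncomputable def ff (n : ℕ) : ℝ := |(descPochhammer ℝ n).eval (1/2 : ℝ)|

lemma cat_rec (n : ℕ) : ((n:ℝ) + 2) * catalan (n+1) = 2 * (2*n+1) * catalan n := by
  have h1 := succ_mul_catalan_eq_centralBinom (n+1)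
  have h2 := Nat.succ_mul_centralBinom_succ n
  have h3 := succ_mul_catalan_eq_centralBinom n
  have key : (n+1) * ((n+2) * catalan (n+1)) = (n+1) * (2 * (2*n+1) * catalan n) := by
    calc (n+1) * ((n+2) * catalan (n+1)) = (n+1) * Nat.centralBinom (n+1) := by rw [h1]
    _ = 2 * (2*n+1) * Nat.centralBinom n := h2
    _ = 2 * (2*n+1) * ((n+1) * catalan n) := by rw [h3]
    _ = (n+1) * (2 * (2*n+1) * catalan n) := by ring
  have := Nat.eq_of_mul_eq_mul_left (Nat.succ_pos n) key
  exact_mod_cast congrArg (Nat.cast : ℕ → ℝ) this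

lemma ff_formula (n : ℕ) : ff (n+1) = Nat.factorial (n+1) * catalan n / 2^(2*n+1) := by
  induction n with
  | zero => simp [ff, descPochhammer]
  | succ m ih =>
    have step : ff (m+2) = ff (m+1) * ((2*m+1)/2) := by
      have : (descPochhammer ℝ (m+2)).eval (1/2 : ℝ)
          = (descPochhammer ℝ (m+1)).eval (1/2 : ℝ) * (1/2 - (m+1)) := by
        rw [descPochhammer_succ_eval]; push_cast; ring
      rw [ff, this, abs_mul, ← ff]
      congr 1
      rw [abs_of_nonpos (by push_cast; linarith)]
      push_cast; ring
    rw [step, ih]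
    have hc := cat_rec m
    rw [Nat.factorial_succ (m+1)]
    push_cast
    have hp1 : (0:ℝ) < 2^(2*(m+1)+1) := by positivity
    have hp2 : (0:ℝ) < 2^(2*m+1) := by positivity
    field_simp
    linear_combination (-(2:ℝ)^(2*m+1) * 2) * hc

theorem stmt0 (n : ℕ) (hn : 2 ≤ n) :
    ∑ i ∈ Finset.Ico 1 n, (n.choose i : ℝ) * ff i * ff (n - i) = 2 * ff n := by
  obtain ⟨m, rfl⟩ := Nat.exists_eq_add_of_le hn
  -- n = 2 + m; rewrite sum over Ico 1 (m+2) as sum over range (m+1) with i = j+1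
  have hsum : ∑ i ∈ Finset.Ico 1 (2+m), ((2+m).choose i : ℝ) * ff i * ff (2+m - i)
      = ∑ j ∈ Finset.range (m+1), ((2+m).choose (j+1) : ℝ) * ff (j+1) * ff (m+1-j) := by
    rw [show 2+m = m+2 by ring, Finset.sum_Ico_eq_sum_range]
    apply Finset.sum_congr rfl
    intro j hj
    have e1 : 1+j = j+1 := by omega
    rw [e1]
    have e2 : m+2-(j+1) = m+1-j := by omega
    rw [e2]
  rw [hsum]
  have key : ∀ j ∈ Finset.range (m+1),
      ((2+m).choose (j+1) : ℝ) * ff (j+1) * ff (m+1-j)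
      = (Nat.factorial (m+2) : ℝ) / 2^(2*m+2) * (catalan j * catalan (m-j)) := by
    intro j hj
    simp only [Finset.mem_range] at hj
    have hjm : j ≤ m := by omega
    have h1 : ff (j+1) = Nat.factorial (j+1) * catalan j / 2^(2*j+1) := ff_formula j
    have h2 : ff (m+1-j) = Nat.factorial (m-j+1) * catalan (m-j) / 2^(2*(m-j)+1) := by
      have : m+1-j = (m-j)+1 := by omega
      rw [this]; exact ff_formula (m-j)
    have hchoose : ((m+2).choose (j+1) : ℝ) * Nat.factorial (j+1) * Nat.factorial (m-j+1) = Nat.factorial (m+2) := by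
      have := Nat.choose_mul_factorial_mul_factorial (show j+1 ≤ m+2 by omega)
      have heq : m+2-(j+1) = m-j+1 := by omega
      rw [heq] at this
      exact_mod_cast congrArg (Nat.cast : ℕ → ℝ) this
    have hpow : (2:ℝ)^(2*j+1) * 2^(2*(m-j)+1) = 2^(2*m+2) := by
      rw [← pow_add]; congr 1; omega
    rw [show 2+m = m+2 by ring, h1, h2, ← hpow]
    have p1 : ((2:ℝ)^(2*j+1)) ≠ 0 := by positivity
    have p2 : ((2:ℝ)^(2*(m-j)+1)) ≠ 0 := by positivity
    field_simp
    linear_combination ((catalan j : ℝ) * (catalan (m-j) : ℝ)) * hchoose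
  rw [Finset.sum_congr rfl key, ← Finset.mul_sum]
  have hcat : ∑ j ∈ Finset.range (m+1), ((catalan j : ℝ) * catalan (m-j)) = catalan (m+1) := by
    rw [catalan_succ m]
    rw [← Fin.sum_univ_eq_sum_range (fun j => ((catalan j : ℝ) * catalan (m-j)))]
    push_cast
    rfl
  rw [hcat]
  have := ff_formula (m+1)
  rw [show 2+m = m+2 by ring, this]
  field_simp
  ring
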